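/- arXiv:1807.02517 — 3 statements merged into one kernel-verified Lean document; each statement's English description precedes it below -/
import Mathlib

section
/- Let (M, N, i, π, h) be a contraction of cochain complexes of K-vector spaces, and define the degree −1 graded map h₁ := (d_N ∘ h + h ∘ d_N) ∘ h ∘ (d_N ∘ h + h ∘ d_N). Then (M, N, i, π, h₁) is again a contraction (i.e. i ∘ π − id_N = d_N ∘ h₁ + h₁ ∘ d_N), and it satisfies the side conditions h₁ ∘ i = 0 and π ∘ h₁ = 0. -/
open CategoryTheory

/-- The degree `0` map `d ∘ h + h ∘ d : N ⟶ N` in degree `n`. -/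
noncomputable def dhPlusHd {K : Type} [Field K]
    (N : CochainComplex (ModuleCat K) ℤ)
    (h : ∀ p q : ℤ, N.X p ⟶ N.X q) (n : ℤ) : N.X n ⟶ N.X n :=
  h n (n - 1) ≫ N.d (n - 1) n + N.d n (n + 1) ≫ h (n + 1) n

/-- The degree `-1` map `h₁ := (d ∘ h + h ∘ d) ∘ h ∘ (d ∘ h + h ∘ d)`,
encoded as a family of maps `N.X p ⟶ N.X q`. -/
noncomputable def hOne {K : Type} [Field K]
    (N : CochainComplex (ModuleCat K) ℤ)
    (h : ∀ p q : ℤ, N.X p ⟶ N.X q) (p q : ℤ) : N.X p ⟶ N.X q :=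
  dhPlusHd N h p ≫ h p q ≫ dhPlusHd N h q

/-- Let `(M, N, i, π, h)` be a contraction of cochain complexes of `K`-vector
spaces and set `h₁ := (d_N ∘ h + h ∘ d_N) ∘ h ∘ (d_N ∘ h + h ∘ d_N)`.  Then
`h₁` is again of degree `-1`, `(M, N, i, π, h₁)` is again a contraction, and it
satisfies the side conditions `h₁ ∘ i = 0` and `π ∘ h₁ = 0`. -/
theorem stmt4 {K : Type} [Field K]
    (M N : CochainComplex (ModuleCat K) ℤ)
    (i : M ⟶ N) (π : N ⟶ M)
    (h : ∀ p q : ℤ, N.X p ⟶ N.X q)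
    (h_deg : ∀ p q : ℤ, q ≠ p - 1 → h p q = 0)
    (h_retract : i ≫ π = 𝟙 M)
    (h_htpy : ∀ n : ℤ,
      π.f n ≫ i.f n - 𝟙 (N.X n) =
        h n (n - 1) ≫ N.d (n - 1) n + N.d n (n + 1) ≫ h (n + 1) n) :
    (∀ p q : ℤ, q ≠ p - 1 → hOne N h p q = 0) ∧
    (∀ n : ℤ,
      π.f n ≫ i.f n - 𝟙 (N.X n) =
        hOne N h n (n - 1) ≫ N.d (n - 1) n + N.d n (n + 1) ≫ hOne N h (n + 1) n) ∧
    (∀ n : ℤ, i.f n ≫ hOne N h n (n - 1) = 0) ∧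
    (∀ n : ℤ, hOne N h n (n - 1) ≫ π.f (n - 1) = 0) := by
  have hiπ : ∀ n : ℤ, i.f n ≫ π.f n = 𝟙 (M.X n) := fun n => by
    have := congrArg (fun f => HomologicalComplex.Hom.f f n) h_retract
    simpa using this
  -- e n = π.f n ≫ i.f n - 𝟙
  have he : ∀ n : ℤ, dhPlusHd N h n = π.f n ≫ i.f n - 𝟙 (N.X n) := fun n => by
    rw [dhPlusHd, ← h_htpy n]
  have hcomm : ∀ p q : ℤ, N.d p q ≫ dhPlusHd N h q = dhPlusHd N h p ≫ N.d p q := by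
    intro p q
    simp only [he, Preadditive.comp_sub, Preadditive.sub_comp, Category.comp_id,
      Category.id_comp]
    congr 1
    rw [← Category.assoc, ← π.comm p q, Category.assoc, ← i.comm p q, ← Category.assoc]
  have hsq : ∀ n : ℤ, dhPlusHd N h n ≫ dhPlusHd N h n = -dhPlusHd N h n := by
    intro n
    simp only [he, Preadditive.comp_sub, Preadditive.sub_comp, Category.comp_id,
      Category.id_comp]
    rw [show (π.f n ≫ i.f n) ≫ π.f n ≫ i.f n = π.f n ≫ i.f n by
      rw [Category.assoc, ← Category.assoc (i.f n), hiπ n, Category.id_comp]]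
    abel
  have hie : ∀ n : ℤ, i.f n ≫ dhPlusHd N h n = 0 := by
    intro n
    rw [he]
    simp only [Preadditive.comp_sub, Category.comp_id, ← Category.assoc, hiπ n]
    simp
  have heπ : ∀ n : ℤ, dhPlusHd N h n ≫ π.f n = 0 := by
    intro n
    rw [he]
    simp only [Preadditive.sub_comp, Category.id_comp, Category.assoc, hiπ n]
    simp
  refine ⟨fun p q hq => by simp [hOne, h_deg p q hq], fun n => ?_, fun n => by
    simp [hOne, reassoc_of% (hie n)], fun n => by simp [hOne, heπ (n-1)]⟩
  have e1 : hOne N h n (n - 1) ≫ N.d (n - 1) n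
      = dhPlusHd N h n ≫ ((h n (n - 1) ≫ N.d (n - 1) n) ≫ dhPlusHd N h n) := by
    rw [hOne]
    simp only [Category.assoc]
    rw [← hcomm (n - 1) n]
  have e2 : N.d n (n + 1) ≫ hOne N h (n + 1) n
      = dhPlusHd N h n ≫ ((N.d n (n + 1) ≫ h (n + 1) n) ≫ dhPlusHd N h n) := by
    rw [hOne, ← Category.assoc, hcomm n (n + 1)]
    simp only [Category.assoc]
  have key : hOne N h n (n - 1) ≫ N.d (n - 1) n + N.d n (n + 1) ≫ hOne N h (n + 1) n
      = dhPlusHd N h n ≫ dhPlusHd N h n ≫ dhPlusHd N h n := by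
    rw [e1, e2, ← Preadditive.comp_add, ← Preadditive.add_comp]
    rfl
  rw [key, hsq n, Preadditive.comp_neg, hsq n, neg_neg, he]
end

section
/- Let [n] denote the finite ordered set {0 < 1 < ⋯ < n}. Let f : [n] → [m] be a strictly increasing map and g : [p] → [m] a monotone (non-decreasing) map. Then the set of monotone maps h : [n] → [p] satisfying g ∘ h = f is in bijection with the product P₀ × P₁ × ⋯ × Pₙ, where Pᵢ = {j ∈ [p] : g(j) = f(i)}; explicitly, every tuple (j₀, …, jₙ) with jᵢ ∈ Pᵢ is automatically strictly increasing and determines such an h, and this correspondence is bijective. -/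
/-- Let `f : [n] → [m]` be strictly increasing and `g : [p] → [m]` monotone
(non-decreasing).  Then every tuple `(j₀, …, jₙ)` with `jᵢ ∈ Pᵢ = g⁻¹(f i)` is
automatically strictly increasing, and the evaluation map from
`{monotone h : [n] → [p] with g ∘ h = f}` to `P₀ × ⋯ × Pₙ` is a bijection. -/
theorem stmt7 (n m p : ℕ)
    (f : Fin (n + 1) → Fin (m + 1)) (hf : StrictMono f)
    (g : Fin (p + 1) → Fin (m + 1)) (hg : Monotone g) :
    (∀ j : (i : Fin (n + 1)) → {x : Fin (p + 1) // g x = f i},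
      StrictMono fun i => ((j i : Fin (p + 1)))) ∧
    Function.Bijective
      (fun (h : {h : Fin (n + 1) → Fin (p + 1) // Monotone h ∧ g ∘ h = f})
          (i : Fin (n + 1)) =>
        (⟨h.1 i, congrFun h.2.2 i⟩ : {x : Fin (p + 1) // g x = f i})) := by
  have key : ∀ j : (i : Fin (n + 1)) → {x : Fin (p + 1) // g x = f i},
      StrictMono fun i => ((j i : Fin (p + 1))) := by
    intro j i i' hlt
    by_contra hle
    push_neg at hle
    have := hg hle
    rw [(j i').2, (j i).2] at this
    exact absurd this (not_le.mpr (hf hlt))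
  refine ⟨key, ?_, ?_⟩
  · rintro ⟨h₁, hm₁, hc₁⟩ ⟨h₂, hm₂, hc₂⟩ heq
    ext i
    have := congrArg Subtype.val (congrFun heq i)
    simp only [Fin.ext_iff] at this ⊢; exact this
  · intro j
    refine ⟨⟨fun i => (j i : Fin (p + 1)), (key j).monotone, ?_⟩, ?_⟩
    · funext i; exact (j i).2
    · funext i; ext; rfl
end

section
/- Let f : [n] → [m] be a monotone map. If f is not injective, then the Whitney elementary form ω_f is zero in Ω_m. If f is injective, then the pullback of ω_f along f itself satisfies f*ω_f = n! · dx₁ ∧ dx₂ ∧ ⋯ ∧ dxₙ in Ω_n. -/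
noncomputable section

/-- The DG-algebra of polynomial differential forms on the standard
`m`-simplex, modelled as the exterior algebra over
`R = MvPolynomial (Fin m) K` of the free module `R^m`. -/
abbrev Omega (K : Type) [Field K] (m : ℕ) :=
  ExteriorAlgebra (MvPolynomial (Fin m) K) (Fin m → MvPolynomial (Fin m) K)

/-- The coordinates `x₀, x₁, …, x_m`, where `x₁, …, x_m` are the polynomial
variables and `x₀ := 1 - (x₁ + ⋯ + x_m)`. -/
def xC (K : Type) [Field K] (m : ℕ) : Fin (m + 1) → MvPolynomial (Fin m) K :=
  Fin.cases (1 - ∑ i : Fin m, MvPolynomial.X i) (fun i => MvPolynomial.X i)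

/-- The vectors of `R^m` representing `dx₀, dx₁, …, dx_m`: the standard basis
vectors for `dx₁, …, dx_m`, and `-(dx₁ + ⋯ + dx_m)` for `dx₀`. -/
def vDX (K : Type) [Field K] (m : ℕ) :
    Fin (m + 1) → (Fin m → MvPolynomial (Fin m) K) :=
  Fin.cases (-∑ i : Fin m, Pi.single i 1) (fun i => Pi.single i 1)

/-- The one-forms `dx₀, dx₁, …, dx_m` in `Ω_m` (degree `1` elements of the
exterior algebra). -/
def dX (K : Type) [Field K] (m : ℕ) (j : Fin (m + 1)) : Omega K m :=
  ExteriorAlgebra.ι (MvPolynomial (Fin m) K) (vDX K m j)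

/-- The Whitney elementary form
`ω_f = n! Σᵢ (-1)ⁱ x_{f i} dx_{f 0} ∧ ⋯ ∧ (omit dx_{f i}) ∧ ⋯ ∧ dx_{f n}`
associated to a map `f : [n] → [m]`. -/
def omegaF (K : Type) [Field K] {n m : ℕ} (f : Fin (n + 1) → Fin (m + 1)) :
    Omega K m :=
  (n.factorial : MvPolynomial (Fin m) K) •
    ∑ i : Fin (n + 1),
      (-1 : MvPolynomial (Fin m) K) ^ (i : ℕ) •
        (algebraMap (MvPolynomial (Fin m) K) (Omega K m) (xC K m (f i)) *
          ((List.ofFn fun j : Fin (n + 1) => dX K m (f j)).eraseIdx (i : ℕ)).prod)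

/-- On polynomials, the pullback along `g : [n] → [m]` substitutes
`x_j ↦ Σ_{i ∈ [n], g i = j} x_i`. -/
def pullbackPoly (K : Type) [Field K] {n m : ℕ}
    (g : Fin (n + 1) → Fin (m + 1)) :
    MvPolynomial (Fin m) K →ₐ[K] MvPolynomial (Fin n) K :=
  MvPolynomial.aeval fun i : Fin m =>
    ∑ j ∈ Finset.univ.filter (fun j : Fin (n + 1) => g j = i.succ), xC K n j

/-- On one-forms, the pullback along `g : [n] → [m]` sends
`dx_j ↦ Σ_{i ∈ [n], g i = j} dx_i`; this is the corresponding vector. -/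
def pullbackVec (K : Type) [Field K] {n m : ℕ}
    (g : Fin (n + 1) → Fin (m + 1)) (i : Fin m) :
    Fin n → MvPolynomial (Fin n) K :=
  ∑ j ∈ Finset.univ.filter (fun j : Fin (n + 1) => g j = i.succ), vDX K n j

/-- The pullback `g* : Ω_m → Ω_n` along a map `g : [n] → [m]`: the (unique)
`K`-algebra homomorphism determined by `x_j ↦ Σ_{i ∈ [n], g i = j} x_i` and
`dx_j ↦ Σ_{i ∈ [n], g i = j} dx_i` for every `j ∈ [m]`. -/
def pullback (K : Type) [Field K] {n m : ℕ}
    (g : Fin (n + 1) → Fin (m + 1)) : Omega K m → Omega K n :=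
  letI φ : MvPolynomial (Fin m) K →+* Omega K n :=
    (algebraMap (MvPolynomial (Fin n) K) (Omega K n)).comp
      (pullbackPoly K g).toRingHom
  letI hcomm : ∀ (c : MvPolynomial (Fin m) K) (x : Omega K n),
      φ c * x = x * φ c := fun c x => Algebra.commutes (pullbackPoly K g c) x
  letI : Algebra (MvPolynomial (Fin m) K) (Omega K n) := φ.toAlgebra' hcomm
  letI L : (Fin m → MvPolynomial (Fin m) K) →ₗ[MvPolynomial (Fin m) K]
      Omega K n :=
    { toFun := fun v =>
        ExteriorAlgebra.ι (MvPolynomial (Fin n) K)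
          (∑ i : Fin m, pullbackPoly K g (v i) • pullbackVec K g i)
      map_add' := by
        intro u v
        show ExteriorAlgebra.ι (MvPolynomial (Fin n) K)
            (∑ i : Fin m, pullbackPoly K g ((u + v) i) • pullbackVec K g i) =
          ExteriorAlgebra.ι (MvPolynomial (Fin n) K)
              (∑ i : Fin m, pullbackPoly K g (u i) • pullbackVec K g i) +
            ExteriorAlgebra.ι (MvPolynomial (Fin n) K)
              (∑ i : Fin m, pullbackPoly K g (v i) • pullbackVec K g i)
        rw [← map_add, ← Finset.sum_add_distrib]
        exact congrArg _ (Finset.sum_congr rfl fun i _ => by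
          simp [Pi.add_apply, map_add, add_smul])
      map_smul' := by
        intro c v
        show ExteriorAlgebra.ι (MvPolynomial (Fin n) K)
            (∑ i : Fin m, pullbackPoly K g ((c • v) i) • pullbackVec K g i) =
          algebraMap (MvPolynomial (Fin n) K) (Omega K n)
              (pullbackPoly K g c) *
            ExteriorAlgebra.ι (MvPolynomial (Fin n) K)
              (∑ i : Fin m, pullbackPoly K g (v i) • pullbackVec K g i)
        rw [← Algebra.smul_def, ← map_smul, Finset.smul_sum]
        exact congrArg _ (Finset.sum_congr rfl fun i _ => by
          simp [Pi.smul_apply, smul_eq_mul, map_mul, smul_smul]) }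
  (ExteriorAlgebra.lift (MvPolynomial (Fin m) K)
    ⟨L, fun v => ExteriorAlgebra.ι_sq_zero _⟩ :
      Omega K m →ₐ[MvPolynomial (Fin m) K] Omega K n)

set_option synthInstance.maxHeartbeats 1000000
set_option maxHeartbeats 4000000
section PB
variable (K : Type) [Field K] {n m : ℕ} (g : Fin (n + 1) → Fin (m + 1))

lemma pullback_mul (x y : Omega K m) :
    pullback K g (x * y) = pullback K g x * pullback K g y := by
  unfold pullback; exact map_mul _ x y

lemma pullback_add (x y : Omega K m) :
    pullback K g (x + y) = pullback K g x + pullback K g y := by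
  unfold pullback; exact map_add _ x y

lemma pullback_algebraMap (p : MvPolynomial (Fin m) K) :
    pullback K g (algebraMap (MvPolynomial (Fin m) K) (Omega K m) p)
      = algebraMap (MvPolynomial (Fin n) K) (Omega K n) (pullbackPoly K g p) := by
  letI φ : MvPolynomial (Fin m) K →+* Omega K n :=
    (algebraMap (MvPolynomial (Fin n) K) (Omega K n)).comp
      (pullbackPoly K g).toRingHom
  letI hcomm : ∀ (c : MvPolynomial (Fin m) K) (x : Omega K n),
      φ c * x = x * φ c := fun c x => Algebra.commutes (pullbackPoly K g c) x
  letI : Algebra (MvPolynomial (Fin m) K) (Omega K n) := φ.toAlgebra' hcomm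
  unfold pullback
  exact AlgHom.commutes _ p

lemma pullback_iota (v : Fin m → MvPolynomial (Fin m) K) :
    pullback K g (ExteriorAlgebra.ι (MvPolynomial (Fin m) K) v)
      = ExteriorAlgebra.ι (MvPolynomial (Fin n) K)
          (∑ i : Fin m, pullbackPoly K g (v i) • pullbackVec K g i) := by
  letI φ : MvPolynomial (Fin m) K →+* Omega K n :=
    (algebraMap (MvPolynomial (Fin n) K) (Omega K n)).comp
      (pullbackPoly K g).toRingHom
  letI hcomm : ∀ (c : MvPolynomial (Fin m) K) (x : Omega K n),
      φ c * x = x * φ c := fun c x => Algebra.commutes (pullbackPoly K g c) x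
  letI : Algebra (MvPolynomial (Fin m) K) (Omega K n) := φ.toAlgebra' hcomm
  unfold pullback
  exact ExteriorAlgebra.lift_ι_apply (R := MvPolynomial (Fin m) K)
    (A := Omega K n) _ (fun v => ExteriorAlgebra.ι_sq_zero _) v

end PB
set_option synthInstance.maxHeartbeats 1000000
set_option maxHeartbeats 4000000

lemma eraseIdx_ofFn {α : Type*} {n : ℕ} (g : Fin (n + 1) → α) (i : Fin (n + 1)) :
    (List.ofFn g).eraseIdx (i : ℕ) = List.ofFn (fun j => g (i.succAbove j)) := by
  apply List.ext_getElem
  · simp [List.length_eraseIdx_of_lt, i.isLt]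
  · intro j h1 h2
    simp only [List.length_ofFn] at h2
    rw [List.getElem_ofFn]
    rcases lt_or_ge j (i : ℕ) with hj | hj
    · rw [List.getElem_eraseIdx_of_lt _ hj, List.getElem_ofFn]
      congr 1
      rw [Fin.succAbove_of_castSucc_lt _ _ hj]
      rfl
    · rw [List.getElem_eraseIdx_of_ge _ hj, List.getElem_ofFn]
      congr 1
      rw [Fin.succAbove_of_le_castSucc _ _ (by simpa [Fin.le_def] using hj)]
      rfl

section xv
variable (K : Type) [Field K] (n : ℕ)

lemma sum_xC : ∑ j : Fin (n + 1), xC K n j = 1 := by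
  rw [Fin.sum_univ_succ]
  simp [xC]

lemma sum_vDX : ∑ j : Fin (n + 1), vDX K n j = 0 := by
  rw [Fin.sum_univ_succ]
  simp [vDX]

end xv
set_option linter.unusedSectionVars false
section Alt
variable {R : Type*} [CommRing R] {M N : Type*} [AddCommGroup M] [Module R M]
  [AddCommGroup N] [Module R N] {k : ℕ}

lemma succAbove_comp_eq_update {α : Type*} (u : Fin (k + 1) → α) (i : Fin k) :
    (fun j => u (i.castSucc.succAbove j))
      = Function.update (fun j => u (i.succ.succAbove j)) i (u i.succ) := by
  funext j
  rcases eq_or_ne j i with rfl | hj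
  · simp [Fin.succAbove_castSucc_self]
  · rw [Function.update_of_ne hj]
    congr 1
    rcases lt_or_gt_of_ne hj with h | h
    · rw [Fin.succAbove_of_castSucc_lt _ _ (by exact_mod_cast Fin.castSucc_lt_castSucc_iff.2 h),
        Fin.succAbove_of_castSucc_lt _ _ (lt_trans (Fin.castSucc_lt_castSucc_iff.2 h)
          (Fin.castSucc_lt_succ : i.castSucc < i.succ))]
    · rw [Fin.succAbove_of_le_castSucc _ _ (le_of_lt (Fin.castSucc_lt_castSucc_iff.2 h)),
        Fin.succAbove_of_le_castSucc _ _ (Fin.succ_le_castSucc_iff.2 h)]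

set_option linter.unusedSectionVars false

lemma alt_step (A : M [⋀^Fin k]→ₗ[R] N) (u : Fin (k + 1) → M)
    (hu : ∑ j, u j = 0) (i : Fin k) :
    A (fun j => u (i.castSucc.succAbove j))
      = - A (fun j => u (i.succ.succAbove j)) := by
  set v : Fin k → M := fun j => u (i.succ.succAbove j) with hv
  have hvi : v i = u i.castSucc := by
    simp [hv, Fin.succAbove_succ_self]
  have hus : u i.succ = - ∑ a ∈ Finset.univ.erase i.succ, u a := by
    refine eq_neg_of_add_eq_zero_left ?_
    rw [Finset.add_sum_erase Finset.univ u (Finset.mem_univ i.succ)]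
    exact hu
  have hsum : A (Function.update v i (∑ a ∈ Finset.univ.erase i.succ, u a))
      = ∑ a ∈ Finset.univ.erase i.succ, A (Function.update v i (u a)) :=
    A.toMultilinearMap.map_update_sum _ _ _ _
  rw [succAbove_comp_eq_update u i, hus, ← neg_one_smul R
    (∑ a ∈ Finset.univ.erase i.succ, u a), A.map_update_smul, neg_one_smul]
  rw [show Function.update (fun j => u (i.succ.succAbove j)) i
      (∑ a ∈ Finset.univ.erase i.succ, u a)
      = Function.update v i (∑ a ∈ Finset.univ.erase i.succ, u a) from rfl, hsum]
  congr 1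
  rw [Finset.sum_eq_single i.castSucc]
  · rw [← hvi, Function.update_eq_self]
  · intro a ha hac
    have has : a ≠ i.succ := Finset.ne_of_mem_erase ha
    obtain ⟨j', hj'⟩ := Fin.exists_succAbove_eq has
    have hji : j' ≠ i := by
      rintro rfl
      rw [Fin.succAbove_succ_self] at hj'
      exact hac hj'.symm
    apply A.map_eq_zero_of_eq _ (i := i) (j := j') _ (Ne.symm hji)
    rw [Function.update_self, Function.update_of_ne hji]
    simp [hv, hj']
  · intro h
    exact absurd (Finset.mem_erase.2 ⟨(Fin.castSucc_lt_succ : i.castSucc < i.succ).ne, Finset.mem_univ _⟩) h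

lemma alt_succAbove (A : M [⋀^Fin k]→ₗ[R] N) (u : Fin (k + 1) → M)
    (hu : ∑ j, u j = 0) (i : Fin (k + 1)) :
    A (fun j => u (i.succAbove j)) = (-1 : ℤ) ^ (i : ℕ) • A (fun j => u j.succ) := by
  induction i using Fin.induction with
  | zero => simp
  | succ i ih =>
    have hstep := alt_step A u hu i
    rw [hstep] at ih
    have h2 : A (fun j => u (i.succ.succAbove j))
        = -((-1 : ℤ) ^ (i : ℕ) • A (fun j => u j.succ)) := by
      rw [← Fin.coe_castSucc i]
      exact neg_eq_iff_eq_neg.1 ih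
    rw [h2, Fin.val_succ, pow_succ]
    simp [mul_smul]

lemma succAbove_comp_eq_of_eq {α : Type*} {k : ℕ} (u : Fin (k + 1) → α) (i : Fin k)
    (h : u i.castSucc = u i.succ) :
    (fun j => u (i.castSucc.succAbove j)) = fun j => u (i.succ.succAbove j) := by
  rw [succAbove_comp_eq_update u i]
  funext j
  rcases eq_or_ne j i with rfl | hj
  · rw [Function.update_self, Fin.succAbove_succ_self]
    exact h.symm
  · rw [Function.update_of_ne hj]

end Alt
set_option maxRecDepth 10000
section Main
variable (K : Type) [Field K] {n m : ℕ}

lemma omegaF_eq (f : Fin (n + 1) → Fin (m + 1)) :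
    omegaF K f = (n.factorial : MvPolynomial (Fin m) K) •
      ∑ i : Fin (n + 1),
        (-1 : MvPolynomial (Fin m) K) ^ (i : ℕ) •
          (algebraMap (MvPolynomial (Fin m) K) (Omega K m) (xC K m (f i)) *
            ExteriorAlgebra.ιMulti (MvPolynomial (Fin m) K) n
              (fun j => vDX K m (f (i.succAbove j)))) := by
  unfold omegaF
  congr 1
  refine Finset.sum_congr rfl fun i _ => ?_
  rw [eraseIdx_ofFn (fun j => dX K m (f j)) i, ExteriorAlgebra.ιMulti_apply]
  rfl

lemma part1 (f : Fin (n + 1) → Fin (m + 1)) (hf : Monotone f)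
    (hni : ¬ Function.Injective f) : omegaF K f = 0 := by
  obtain ⟨i, hi⟩ : ∃ i : Fin n, f i.castSucc = f i.succ := by
    simp only [Function.Injective, not_forall] at hni
    obtain ⟨a, b, hab, hne⟩ := hni
    wlog hlt : a < b generalizing a b
    · exact this b a hab.symm (Ne.symm hne) (lt_of_le_of_ne (not_lt.1 hlt) (Ne.symm hne))
    have han : (a : ℕ) < n := lt_of_lt_of_le hlt (Nat.lt_succ_iff.1 b.isLt)
    refine ⟨⟨a, han⟩, ?_⟩
    have hc : (⟨a, han⟩ : Fin n).castSucc = a := by ext; rfl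
    rw [hc]
    refine le_antisymm (hf (by rw [Fin.le_def]; simp [Fin.val_succ])) ?_
    rw [hab]
    exact hf (by rw [Fin.le_def]; rw [Fin.lt_def] at hlt; simpa using hlt)
  rw [omegaF_eq]
  rw [show (∑ k : Fin (n + 1),
      (-1 : MvPolynomial (Fin m) K) ^ (k : ℕ) •
        (algebraMap (MvPolynomial (Fin m) K) (Omega K m) (xC K m (f k)) *
          ExteriorAlgebra.ιMulti (MvPolynomial (Fin m) K) n
            (fun j => vDX K m (f (k.succAbove j))))) = 0 from ?_, smul_zero]
  rw [Finset.sum_eq_add_of_mem i.castSucc i.succ (Finset.mem_univ _) (Finset.mem_univ _)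
    (Fin.castSucc_lt_succ : i.castSucc < i.succ).ne ?_]
  · have hfun : (fun j => vDX K m (f (i.castSucc.succAbove j)))
        = fun j => vDX K m (f (i.succ.succAbove j)) :=
      succAbove_comp_eq_of_eq (fun a => vDX K m (f a)) i (by simpa using congrArg (vDX K m) hi)
    rw [hfun, hi, Fin.coe_castSucc, Fin.val_succ, pow_succ, mul_neg_one, neg_smul,
      add_neg_cancel]
  · intro k _ ⟨hkc, hks⟩
    obtain ⟨j1, hj1⟩ := Fin.exists_succAbove_eq (Ne.symm hkc)
    obtain ⟨j2, hj2⟩ := Fin.exists_succAbove_eq (Ne.symm hks)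
    have hA : ExteriorAlgebra.ιMulti (MvPolynomial (Fin m) K) n
        (fun j => vDX K m (f (k.succAbove j))) = 0 := by
      refine AlternatingMap.map_eq_zero_of_eq _ _ (i := j1) (j := j2) ?_ ?_
      · rw [hj1, hj2, hi]
      · rintro rfl
        rw [hj1] at hj2
        exact (Fin.castSucc_lt_succ : i.castSucc < i.succ).ne hj2
    rw [hA, mul_zero, smul_zero]

end Main
section Fiber
variable {β : Type*} [AddCommMonoid β] {n m : ℕ}

lemma sum_fiber (g : Fin (n + 1) → Fin (m + 1)) (F : Fin (n + 1) → β) :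
    ∑ a : Fin m, ∑ b ∈ Finset.univ.filter (fun b => g b = a.succ), F b
      = ∑ b ∈ Finset.univ.filter (fun b => g b ≠ 0), F b := by
  simp only [Finset.sum_filter]
  rw [Finset.sum_comm]
  refine Finset.sum_congr rfl fun b _ => ?_
  induction g b using Fin.cases with
  | zero => exact Finset.sum_eq_zero fun x _ => if_neg (Ne.symm (Fin.succ_ne_zero x))
  | succ c =>
    rw [Finset.sum_eq_single c (fun a _ ha => by
        rw [if_neg (fun h => ha (Fin.succ_injective _ h.symm))]) (by simp)]
    simp [Fin.succ_ne_zero]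

end Fiber

section PB2
variable (K : Type) [Field K] {n m : ℕ} (g : Fin (n + 1) → Fin (m + 1))

lemma pullbackPoly_xC (j : Fin (m + 1)) :
    pullbackPoly K g (xC K m j)
      = ∑ b ∈ Finset.univ.filter (fun b => g b = j), xC K n b := by
  induction j using Fin.cases with
  | succ c =>
    rw [show xC K m c.succ = MvPolynomial.X c from rfl]
    rw [pullbackPoly, MvPolynomial.aeval_X]
  | zero =>
    rw [show xC K m 0 = 1 - ∑ i : Fin m, MvPolynomial.X i from rfl]
    rw [map_sub, map_one, map_sum]
    have h1 : ∑ i : Fin m, pullbackPoly K g (MvPolynomial.X i)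
        = ∑ b ∈ Finset.univ.filter (fun b => g b ≠ 0), xC K n b := by
      rw [← sum_fiber g (xC K n)]
      refine Finset.sum_congr rfl fun i _ => ?_
      rw [pullbackPoly, MvPolynomial.aeval_X]
    rw [h1]
    have h2 := Finset.sum_filter_add_sum_filter_not Finset.univ
      (fun b : Fin (n + 1) => g b = 0) (xC K n)
    rw [sum_xC] at h2
    rw [eq_comm, ← h2]
    ring

lemma pullback_vec_dX (j : Fin (m + 1)) :
    ∑ i : Fin m, pullbackPoly K g ((vDX K m j) i) • pullbackVec K g i
      = ∑ b ∈ Finset.univ.filter (fun b => g b = j), vDX K n b := by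
  induction j using Fin.cases with
  | succ c =>
    rw [show vDX K m c.succ = Pi.single c 1 from rfl]
    rw [Finset.sum_eq_single c (fun i _ hi => by
        rw [Pi.single_eq_of_ne hi, map_zero, zero_smul]) (by simp)]
    rw [Pi.single_eq_same, map_one, one_smul]
    rfl
  | zero =>
    rw [show vDX K m 0 = -∑ i : Fin m, Pi.single i 1 from rfl]
    have hcomp : ∀ i : Fin m, ((-∑ i' : Fin m, Pi.single i' (1 : MvPolynomial (Fin m) K)) i)
        = -1 := by
      intro i
      simp [Pi.single_apply, Finset.sum_ite_eq]
    have h2 := Finset.sum_filter_add_sum_filter_not Finset.univ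
      (fun b : Fin (n + 1) => g b = 0) (vDX K n)
    rw [sum_vDX] at h2
    have h3 : ∑ i : Fin m, pullbackVec K g i
        = ∑ b ∈ Finset.univ.filter (fun b => g b ≠ 0), vDX K n b :=
      sum_fiber g (vDX K n)
    calc ∑ i : Fin m, pullbackPoly K g ((-∑ i' : Fin m, Pi.single i' (1 : MvPolynomial (Fin m) K)) i) • pullbackVec K g i
        = ∑ i : Fin m, -pullbackVec K g i := by
          simp only [hcomp, map_neg, map_one, neg_smul, one_smul]
      _ = -(∑ i : Fin m, pullbackVec K g i) := by rw [Finset.sum_neg_distrib]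
      _ = -(∑ b ∈ Finset.univ.filter (fun b => g b ≠ 0), vDX K n b) := by rw [h3]
      _ = ∑ b ∈ Finset.univ.filter (fun b => g b = 0), vDX K n b :=
          neg_eq_of_add_eq_zero_left h2

lemma pullback_dX (j : Fin (m + 1)) :
    pullback K g (dX K m j) = ∑ b ∈ Finset.univ.filter (fun b => g b = j), dX K n b := by
  rw [dX, pullback_iota, pullback_vec_dX, map_sum]
  rfl

lemma pullback_zero : pullback K g (0 : Omega K m) = 0 := by
  unfold pullback; exact map_zero _

lemma pullback_one : pullback K g (1 : Omega K m) = 1 := by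
  unfold pullback; exact map_one _

lemma pullback_sum {α : Type*} (s : Finset α) (F : α → Omega K m) :
    pullback K g (∑ a ∈ s, F a) = ∑ a ∈ s, pullback K g (F a) := by
  induction s using Finset.cons_induction with
  | empty => simpa using pullback_zero K g
  | cons a s ha ih => rw [Finset.sum_cons, Finset.sum_cons, pullback_add, ih]

lemma pullback_smul (c : MvPolynomial (Fin m) K) (x : Omega K m) :
    pullback K g (c • x) = pullbackPoly K g c • pullback K g x := by
  rw [Algebra.smul_def, pullback_mul, pullback_algebraMap, ← Algebra.smul_def]

lemma pullback_list_prod (l : List (Omega K m)) :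
    pullback K g l.prod = (l.map (pullback K g)).prod := by
  induction l with
  | nil => simpa using pullback_one K g
  | cons a l ih => rw [List.prod_cons, List.map_cons, List.prod_cons, pullback_mul, ih]

end PB2
section Part2
variable (K : Type) [Field K] {n m : ℕ}

lemma part2 (f : Fin (n + 1) → Fin (m + 1)) (hf : Function.Injective f) :
    pullback K f (omegaF K f) =
      (n.factorial : MvPolynomial (Fin n) K) •
        (List.ofFn fun i : Fin n => dX K n i.succ).prod := by
  have hfilter : ∀ j, Finset.univ.filter (fun b => f b = f j) = {j} := fun j => by
    ext b
    simp [hf.eq_iff]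
  have hι : ∀ a, pullback K f (ExteriorAlgebra.ι (MvPolynomial (Fin m) K) (vDX K m (f a)))
      = ExteriorAlgebra.ι (MvPolynomial (Fin n) K) (vDX K n a) := fun a => by
    have h := pullback_dX K f (f a)
    rw [hfilter, Finset.sum_singleton] at h
    simpa [dX] using h
  have hxC : ∀ a, pullbackPoly K f (xC K m (f a)) = xC K n a := fun a => by
    rw [pullbackPoly_xC, hfilter, Finset.sum_singleton]
  set T : Omega K n := (List.ofFn fun i : Fin n => dX K n i.succ).prod with hT
  have hTalt : ExteriorAlgebra.ιMulti (MvPolynomial (Fin n) K) n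
      (fun j : Fin n => vDX K n j.succ) = T := by
    rw [ExteriorAlgebra.ιMulti_apply, hT]
    rfl
  rw [omegaF_eq, pullback_smul, pullback_sum, map_natCast]
  congr 1
  have hterm : ∀ i : Fin (n + 1),
      pullback K f ((-1 : MvPolynomial (Fin m) K) ^ (i : ℕ) •
        (algebraMap (MvPolynomial (Fin m) K) (Omega K m) (xC K m (f i)) *
          ExteriorAlgebra.ιMulti (MvPolynomial (Fin m) K) n
            (fun j => vDX K m (f (i.succAbove j)))))
      = xC K n i • T := by
    intro i
    rw [pullback_smul, pullback_mul, pullback_algebraMap, hxC, map_pow, map_neg, map_one]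
    have hA : pullback K f (ExteriorAlgebra.ιMulti (MvPolynomial (Fin m) K) n
        (fun j => vDX K m (f (i.succAbove j))))
        = (-1 : ℤ) ^ (i : ℕ) • T := by
      rw [ExteriorAlgebra.ιMulti_apply, pullback_list_prod, List.map_ofFn]
      rw [show (List.ofFn ((pullback K f) ∘ fun j =>
          ExteriorAlgebra.ι (MvPolynomial (Fin m) K) (vDX K m (f (i.succAbove j)))))
          = List.ofFn (fun j => ExteriorAlgebra.ι (MvPolynomial (Fin n) K)
              (vDX K n (i.succAbove j))) by
        congr 1
        funext j
        exact hι (i.succAbove j)]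
      rw [← ExteriorAlgebra.ιMulti_apply,
        alt_succAbove (ExteriorAlgebra.ιMulti (MvPolynomial (Fin n) K) n)
          (vDX K n) (sum_vDX K n) i, hTalt]
    rw [hA]
    have hz : (-1 : ℤ) ^ (i : ℕ) • T = (-1 : MvPolynomial (Fin n) K) ^ (i : ℕ) • T := by
      rw [← Int.cast_smul_eq_zsmul (MvPolynomial (Fin n) K) ((-1 : ℤ) ^ (i : ℕ)) T]
      push_cast
      rfl
    rw [hz, mul_smul_comm, smul_smul, ← pow_add,
      Even.neg_one_pow ⟨(i : ℕ), rfl⟩, one_smul, ← Algebra.smul_def]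
  rw [Finset.sum_congr rfl (fun i _ => hterm i), ← Finset.sum_smul, sum_xC, one_smul]

end Part2


set_option synthInstance.maxHeartbeats 1000000 in
/-- Let `f : [n] → [m]` be monotone. If `f` is not injective then the Whitney
elementary form `ω_f` vanishes in `Ω_m`; if `f` is injective then the pullback
of `ω_f` along `f` itself is `n! ⬝ dx₁ ∧ dx₂ ∧ ⋯ ∧ dxₙ` in `Ω_n`. -/
theorem stmt9 (K : Type) [Field K] [CharZero K] (n m : ℕ)
    (f : Fin (n + 1) → Fin (m + 1)) (hf : Monotone f) :
    (¬ Function.Injective f → omegaF K f = 0) ∧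
    (Function.Injective f →
      pullback K f (omegaF K f) =
        (n.factorial : MvPolynomial (Fin n) K) •
          (List.ofFn fun i : Fin n => dX K n i.succ).prod) := by
  exact ⟨fun h => part1 K f hf h, fun h => part2 K f h⟩

end
end
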